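/- arXiv:1703.10652 — 5 statements merged into one kernel-verified Lean document; each statement's English description precedes it below -/
import Mathlib

section
/- Let h be a positive integer and let (n_k, 0 ≤ k ≤ h+1) be a sequence of positive integers with n_0 = n_{h+1} = 1. Then the sum over k ∈ [0,h] with n_k ≤ n_{k+1} of n_k/(n_k+n_{k+1}), plus the sum over k ∈ [0,h] with n_k > n_{k+1} of log((n_k+n_{k+1})/n_{k+1}), is at least h/3. -/
open Finset

lemma key_bound (a b : ℝ) (ha : 0 < a) (hb : 0 < b) :
    1/3 + (Real.log a - Real.log b)/3 ≤
      if a ≤ b then a/(a+b) else Real.log ((a+b)/b) := by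
  split_ifs with hab
  · have h1 : Real.log a - Real.log b ≤ a/b - 1 := by
      rw [← Real.log_div ha.ne' hb.ne']
      exact Real.log_le_sub_one_of_pos (div_pos ha hb)
    have h2 : a/(3*b) ≤ a/(a+b) := by
      apply div_le_div_of_nonneg_left ha.le (by positivity) (by linarith)
    have h3 : 1/3 + (a/b - 1)/3 = a/(3*b) := by
      field_simp
      ring
    linarith
  · have hba : b < a := not_le.mp hab
    have hkey : Real.exp 1 * (a * b^2) ≤ (a+b)^3 := by
      have he : Real.exp 1 < 2.7182818286 := Real.exp_one_lt_d9
      nlinarith [mul_pos ha hb, sq_nonneg b, mul_pos (mul_pos ha hb) hb,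
        mul_pos (mul_pos ha ha) hb, pow_pos ha 3, pow_pos hb 3]
    have hlog := Real.log_le_log (by positivity) hkey
    rw [Real.log_mul (Real.exp_pos 1).ne' (by positivity),
      Real.log_mul ha.ne' (by positivity), Real.log_exp,
      Real.log_pow, Real.log_pow] at hlog
    rw [Real.log_div (by positivity) hb.ne']
    push_cast at hlog
    linarith

theorem stmt0 (h : ℕ) (hpos : 0 < h) (n : ℕ → ℕ)
    (hn : ∀ k ≤ h + 1, 0 < n k) (h0 : n 0 = 1) (hlast : n (h + 1) = 1) :
    (h : ℝ) / 3 ≤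
      (∑ k ∈ (range (h + 1)).filter (fun k => n k ≤ n (k + 1)),
          (n k : ℝ) / ((n k : ℝ) + (n (k + 1) : ℝ))) +
        ∑ k ∈ (range (h + 1)).filter (fun k => n (k + 1) < n k),
          Real.log (((n k : ℝ) + (n (k + 1) : ℝ)) / (n (k + 1) : ℝ)) := by
  set F : ℕ → ℝ := fun k =>
    if (n k : ℝ) ≤ (n (k+1) : ℝ) then (n k : ℝ)/((n k : ℝ)+(n (k+1) : ℝ))
    else Real.log (((n k : ℝ)+(n (k+1) : ℝ))/(n (k+1) : ℝ)) with hF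
  have hsplit :
      (∑ k ∈ (range (h + 1)).filter (fun k => n k ≤ n (k + 1)),
          (n k : ℝ) / ((n k : ℝ) + (n (k + 1) : ℝ))) +
        ∑ k ∈ (range (h + 1)).filter (fun k => n (k + 1) < n k),
          Real.log (((n k : ℝ) + (n (k + 1) : ℝ)) / (n (k + 1) : ℝ))
      = ∑ k ∈ range (h+1), F k := by
    rw [← Finset.sum_filter_add_sum_filter_not (range (h+1))
      (fun k => n k ≤ n (k+1)) F]
    congr 1
    · apply Finset.sum_congr rfl
      intro k hk
      have hk' : n k ≤ n (k+1) := (Finset.mem_filter.mp hk).2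
      simp only [hF]
      rw [if_pos (by exact_mod_cast hk')]
    · rw [show ((range (h+1)).filter (fun k => n (k+1) < n k))
        = ((range (h+1)).filter (fun k => ¬ n k ≤ n (k+1))) by
          apply Finset.filter_congr; intro k _; simp [not_le]]
      apply Finset.sum_congr rfl
      intro k hk
      have hk' : ¬ n k ≤ n (k+1) := (Finset.mem_filter.mp hk).2
      simp only [hF]
      rw [if_neg (by exact_mod_cast hk')]
  rw [hsplit]
  have hbound : ∀ k ∈ range (h+1),
      1/3 + (Real.log (n k) - Real.log (n (k+1)))/3 ≤ F k := by
    intro k hk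
    have hk' : k < h + 1 := Finset.mem_range.mp hk
    have ha : (0:ℝ) < n k := by exact_mod_cast hn k (by omega)
    have hb : (0:ℝ) < n (k+1) := by exact_mod_cast hn (k+1) (by omega)
    exact key_bound _ _ ha hb
  have hsum := Finset.sum_le_sum hbound
  have htel : ∑ k ∈ range (h+1),
      (1/3 + (Real.log (n k) - Real.log (n (k+1)))/3 : ℝ)
      = ((h:ℝ)+1)/3 := by
    rw [Finset.sum_add_distrib, Finset.sum_const, ← Finset.sum_div,
      Finset.sum_range_sub' (fun k => Real.log (n k)) (h+1)]
    simp [h0, hlast]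
    ring
  rw [htel] at hsum
  have : (h:ℝ)/3 ≤ ((h:ℝ)+1)/3 := by linarith
  linarith
end

section
/- Let (S_t, t ≥ 0) be an integer random walk with i.i.d. steps X satisfying P(X ≥ −1) = 1 and E[X] ≤ 0, started at S_0 = x for an integer x > 0. Fix integers 0 < x_low < y (with the interval [x_low, y)) and let σ = inf{t : S_t ≤ 0}. Let U(σ) be the number of upcrossings of [x_low, y) completed before time σ. Then for every positive integer k, P_x(U(σ) ≥ k) ≤ ((x_low − 1)/y)^k. -/
open MeasureTheory ProbabilityTheory

/-- `(upTimes S xl y i ω).1` is the time `τ_i⁻` at which the walk `S` goes below `xl` for the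
`(i+1)`-st relevant time, and `(upTimes S xl y i ω).2` is the time `τ_i⁺` at which the walk then
next reaches `y` or above, i.e. the time at which the `(i+1)`-st upcrossing of `[xl, y)` is
completed.  The value `⊤` means that the corresponding event never happens. -/
noncomputable def upTimes {Ω : Type*} (S : ℕ → Ω → ℤ) (xl y : ℤ) : ℕ → Ω → ℕ∞ × ℕ∞
  | 0, ω =>
      let a : ℕ∞ := ⨅ (t : ℕ) (_ : S t ω < xl), (t : ℕ∞)
      (a, ⨅ (t : ℕ) (_ : a < (t : ℕ∞) ∧ y ≤ S t ω), (t : ℕ∞))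
  | i + 1, ω =>
      let a : ℕ∞ :=
        ⨅ (t : ℕ) (_ : (upTimes S xl y i ω).2 < (t : ℕ∞) ∧ S t ω < xl), (t : ℕ∞)
      (a, ⨅ (t : ℕ) (_ : a < (t : ℕ∞) ∧ y ≤ S t ω), (t : ℕ∞))


namespace Upx

inductive St : Type
  | pre : St
  | low : ℕ → St
  | high : ℕ → St
  | dead : St
  | done : St
  deriving DecidableEq

instance : Countable St := by
  have h : Function.Injective (fun st : St => match st with
    | .pre => (0, 0) | .low j => (1, j) | .high j => (2, j)
    | .dead => (3, 0) | .done => (4, 0) : St → ℕ × ℕ) := by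
    intro a b hab; cases a <;> cases b <;> simp_all [Prod.ext_iff]
  exact h.countable

instance : MeasurableSpace St := ⊤
instance : MeasurableSingletonClass St := ⟨fun _ => trivial⟩

/-- transition function of the upcrossing-counting automaton. -/
def next (xl y : ℤ) (k : ℕ) : St → ℤ → St
  | .pre, s => if s ≤ 0 then .dead else if s < xl then .low 0 else .pre
  | .low j, s => if s ≤ 0 then .dead else
      if y ≤ s then (if j + 1 = k then .done else .high (j + 1)) else .low j
  | .high j, s => if s ≤ 0 then .dead else if s < xl then .low j else .high j
  | .dead, _ => .dead
  | .done, _ => .done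

/-- state of the automaton fed with the path `S`. -/
def state (S : ℕ → ℤ) (xl y : ℤ) (k : ℕ) : ℕ → St
  | 0 => if S 0 ≤ 0 then .dead else if S 0 < xl then .low 0 else .pre
  | t + 1 => next xl y k (state S xl y k t) (S (t + 1))

/-- value (supermartingale) attached to a state. -/
noncomputable def val (y : ℤ) (k : ℕ) (r : ℝ) : St → ℤ → ℝ
  | .pre, _ => r ^ k
  | .low j, s => r ^ (k - j - 1) * s / y
  | .high j, _ => r ^ (k - j)
  | .dead, _ => 0
  | .done, _ => 1

/-- coefficient of the step in the supermartingale decomposition. -/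
noncomputable def coef (y : ℤ) (k : ℕ) (r : ℝ) : St → ℝ
  | .low j => r ^ (k - j - 1) / y
  | _ => 0

/-- state invariant. -/
def Inv (y : ℤ) (k : ℕ) : St → ℤ → Prop
  | .low j, s => 0 < s ∧ s < y ∧ j < k
  | .high j, _ => j < k
  | _, _ => True

variable {xl y : ℤ} {k : ℕ} {r : ℝ}

lemma inv_next (hxy : xl < y) (hk : 1 ≤ k) {st : St} {s s' : ℤ} (h : Inv y k st s) :
    Inv y k (next xl y k st s') s' := by
  cases st <;> simp only [next, Inv] at h ⊢ <;> split_ifs <;> simp only [Inv] <;> omega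

lemma inv_state (S : ℕ → ℤ) (hxy : xl < y) (hk : 1 ≤ k) (t : ℕ) :
    Inv y k (state S xl y k t) (S t) := by
  induction t with
  | zero => simp only [state]; split_ifs <;> simp only [Inv] <;> omega
  | succ t ih => exact inv_next hxy hk ih


section Arith

variable (hxl : 0 < xl) (hxy : xl < y) (hk : 1 ≤ k) (hr : r = ((xl : ℝ) - 1) / y)

include hxl hxy in
lemma ypos : (0 : ℝ) < (y : ℤ) := by exact_mod_cast lt_trans hxl hxy

include hxl hxy hr in
lemma r_nonneg : 0 ≤ r := by
  rw [hr]; apply div_nonneg _ (le_of_lt (ypos hxl hxy))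
  have : (1:ℝ) ≤ (xl:ℝ) := by exact_mod_cast hxl
  linarith

include hxl hxy hr in
lemma r_le_one : r ≤ 1 := by
  rw [hr, div_le_one (ypos hxl hxy)]
  have : (xl:ℝ) ≤ (y:ℝ) := by exact_mod_cast le_of_lt hxy
  linarith

include hxl hxy hr in
lemma pow_r_le_one (e : ℕ) : r ^ e ≤ 1 :=
  pow_le_one₀ (r_nonneg hxl hxy hr) (r_le_one hxl hxy hr)

include hxl hxy hr in
lemma aux1 (e : ℕ) {c : ℝ} (hc : c ≤ (xl : ℝ) - 1) : r ^ e * c / y ≤ r ^ (e + 1) := by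
  have hy := ypos hxl hxy
  have h0 := r_nonneg hxl hxy hr
  have hry : r * (y : ℝ) = (xl : ℝ) - 1 := by rw [hr]; field_simp
  rw [pow_succ, div_le_iff₀ hy]
  calc r ^ e * c ≤ r ^ e * (r * y) := by rw [hry]; gcongr
    _ = r ^ e * r * y := by ring
include hxl hxy hr in
lemma val_nonneg {st : St} {s : ℤ} (h : Inv y k st s) : 0 ≤ val y k r st s := by
  have hy := ypos hxl hxy
  have h0 := r_nonneg hxl hxy hr
  cases st <;> simp only [val, Inv] at h ⊢
  · positivity
  · obtain ⟨h1, -, -⟩ := h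
    have : (0:ℝ) ≤ (s:ℝ) := by exact_mod_cast le_of_lt h1
    positivity
  · positivity
  · exact le_refl _
  · exact zero_le_one

include hxl hxy hr in
lemma val_le_one {st : St} {s : ℤ} (h : Inv y k st s) : val y k r st s ≤ 1 := by
  have hy := ypos hxl hxy
  have h0 := r_nonneg hxl hxy hr
  have h1 := r_le_one hxl hxy hr
  cases st <;> simp only [val, Inv] at h ⊢
  · exact pow_r_le_one hxl hxy hr _
  · obtain ⟨hs0, hs1, -⟩ := h
    have hsy : (s:ℝ) ≤ (y:ℝ) := by exact_mod_cast le_of_lt hs1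
    have hss : (0:ℝ) ≤ (s:ℝ) := by exact_mod_cast le_of_lt hs0
    calc r ^ (k - _ - 1) * s / y ≤ 1 * s / y := by gcongr; exact pow_r_le_one hxl hxy hr _
      _ = s / y := by ring
      _ ≤ 1 := by rw [div_le_one hy]; exact hsy
  · exact pow_r_le_one hxl hxy hr _
  · exact zero_le_one
  · exact le_refl _

include hxl hxy hr in
lemma coef_nonneg (st : St) : 0 ≤ coef y k r st := by
  have hy := ypos hxl hxy
  have h0 := r_nonneg hxl hxy hr
  cases st <;> simp only [coef] <;> positivity

include hxl hxy hr in
lemma coef_le_one (st : St) : coef y k r st ≤ 1 := by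
  have hy := ypos hxl hxy
  have hy1 : (1:ℝ) ≤ (y:ℝ) := by
    have : (1:ℤ) ≤ y := by omega
    exact_mod_cast this
  cases st <;> simp only [coef]
  any_goals exact zero_le_one
  calc r ^ _ / (y:ℝ) ≤ 1 / 1 := by
        apply div_le_div₀ zero_le_one (pow_r_le_one hxl hxy hr _) one_pos hy1
    _ = 1 := by norm_num

include hxl hxy hk hr in
lemma val_next {st : St} {s s' : ℤ} (h : Inv y k st s) (hs' : s - 1 ≤ s') :
    val y k r (next xl y k st s') s' ≤ val y k r st s + coef y k r st * ((s' : ℝ) - (s : ℝ)) := by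
  have hy := ypos hxl hxy
  have h0 := r_nonneg hxl hxy hr
  cases st with
  | pre =>
    simp only [next, coef, mul_zero, zero_mul, add_zero]
    split_ifs with h1 h2
    · simp only [val]; positivity
    · simp only [val]
      have hc : (s' : ℝ) ≤ (xl : ℝ) - 1 := by
        have : s' ≤ xl - 1 := by omega
        exact_mod_cast this
      have := aux1 hxl hxy hr (k - 0 - 1) hc
      calc r ^ (k - 0 - 1) * (s' : ℝ) / y ≤ r ^ (k - 0 - 1 + 1) := this
        _ = r ^ k := by congr 1; omega
    · simp only [val]; exact le_refl _
  | low j =>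
    obtain ⟨hs0, hsy, hjk⟩ := h
    have key : val y k r (.low j) s + coef y k r (.low j) * ((s' : ℝ) - (s : ℝ))
        = r ^ (k - j - 1) * (s' : ℝ) / y := by
      simp only [val, coef]; field_simp; ring
    rw [key]
    simp only [next]
    split_ifs with h1 h2 h3
    · have : s' = 0 := by omega
      subst this
      simp only [val, Int.cast_zero, mul_zero, zero_div, le_refl]
    · simp only [val]
      have he : k - j - 1 = 0 := by omega
      rw [he, pow_zero, one_mul, le_div_iff₀ hy, one_mul]
      exact_mod_cast h2
    · simp only [val]
      have he : k - (j + 1) = k - j - 1 := by omega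
      rw [he, mul_div_assoc]
      have hge : (1:ℝ) ≤ (s' : ℝ) / y := by
        rw [le_div_iff₀ hy, one_mul]; exact_mod_cast h2
      calc r ^ (k - j - 1) = r ^ (k - j - 1) * 1 := by ring
        _ ≤ r ^ (k - j - 1) * ((s':ℝ) / y) := by gcongr
    · simp only [val]; exact le_refl _
  | high j =>
    have hjk : j < k := h
    simp only [next, coef, mul_zero, zero_mul, add_zero]
    split_ifs with h1 h2
    · simp only [val]; positivity
    · simp only [val]
      have hc : (s' : ℝ) ≤ (xl : ℝ) - 1 := by
        have : s' ≤ xl - 1 := by omega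
        exact_mod_cast this
      have := aux1 hxl hxy hr (k - j - 1) hc
      calc r ^ (k - j - 1) * (s' : ℝ) / y ≤ r ^ (k - j - 1 + 1) := this
        _ = r ^ (k - j) := by congr 1; omega
    · simp only [val]; exact le_refl _
  | dead => simp only [next, val, coef, mul_zero, zero_mul, add_zero, le_refl]
  | done => simp only [next, val, coef, mul_zero, zero_mul, add_zero, le_refl]

end Arith

section Hit

lemma hit_le {P : ℕ → Prop} {t : ℕ} (h : P t) :
    (⨅ (t : ℕ) (_ : P t), (t : ℕ∞)) ≤ (t : ℕ∞) :=
  iInf₂_le t h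

lemma hit_ne_top {P : ℕ → Prop} (h : (⨅ (t : ℕ) (_ : P t), (t : ℕ∞)) ≠ ⊤) :
    ∃ n : ℕ, (⨅ (t : ℕ) (_ : P t), (t : ℕ∞)) = (n : ℕ∞) ∧ P n ∧ ∀ m, m < n → ¬ P m := by
  classical
  have he : ∃ t, P t := by
    by_contra hne
    push_neg at hne
    exact h (by simp [iInf_eq_top, hne])
  refine ⟨Nat.find he, ?_, Nat.find_spec he, fun m hm => Nat.find_min he hm⟩
  apply le_antisymm
  · exact hit_le (Nat.find_spec he)
  · refine le_iInf₂ fun t ht => ?_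
    exact_mod_cast Nat.find_min' he ht

end Hit

section Path

variable {Sp : ℕ → ℤ} {xl y : ℤ} {k : ℕ}

lemma stay_low (hxl : 0 < xl) {j a b : ℕ} (hab : a ≤ b)
    (h : state Sp xl y k a = .low j)
    (hmid : ∀ u, a < u → u ≤ b → 0 < Sp u ∧ Sp u < y) :
    state Sp xl y k b = .low j := by
  induction b, hab using Nat.le_induction with
  | base => exact h
  | succ b hb ih =>
    have hb' : state Sp xl y k b = .low j :=
      ih fun u hu1 hu2 => hmid u hu1 (by omega)
    obtain ⟨h1, h2⟩ := hmid (b + 1) (by omega) le_rfl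
    simp only [state, hb', next, if_neg (by omega : ¬ Sp (b+1) ≤ 0),
      if_neg (not_le.mpr h2)]

lemma stay_high (hxl : 0 < xl) {j a b : ℕ} (hab : a ≤ b)
    (h : state Sp xl y k a = .high j)
    (hmid : ∀ u, a < u → u ≤ b → xl ≤ Sp u) :
    state Sp xl y k b = .high j := by
  induction b, hab using Nat.le_induction with
  | base => exact h
  | succ b hb ih =>
    have hb' : state Sp xl y k b = .high j :=
      ih fun u hu1 hu2 => hmid u hu1 (by omega)
    have h1 := hmid (b + 1) (by omega) le_rfl
    simp only [state, hb', next, if_neg (by omega : ¬ Sp (b+1) ≤ 0),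
      if_neg (by omega : ¬ Sp (b+1) < xl)]

lemma stay_pre (hxl : 0 < xl) {b : ℕ}
    (hmid : ∀ u, u ≤ b → xl ≤ Sp u) :
    state Sp xl y k b = .pre := by
  induction b with
  | zero =>
    have := hmid 0 le_rfl
    simp only [state, if_neg (by omega : ¬ Sp 0 ≤ 0), if_neg (by omega : ¬ Sp 0 < xl)]
  | succ b ih =>
    have hb' : state Sp xl y k b = .pre := ih fun u hu => hmid u (by omega)
    have h1 := hmid (b + 1) le_rfl
    simp only [state, hb', next, if_neg (by omega : ¬ Sp (b+1) ≤ 0),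
      if_neg (by omega : ¬ Sp (b+1) < xl)]

lemma state_congr {S1 S2 : ℕ → ℤ} (t : ℕ)
    (h : ∀ u, u ≤ t → S1 u = S2 u) : state S1 xl y k t = state S2 xl y k t := by
  induction t with
  | zero => simp only [state, h 0 le_rfl]
  | succ t ih =>
    simp only [state, ih fun u hu => h u (by omega), h (t + 1) le_rfl]

lemma done_absorb {Sp : ℕ → ℤ} {n m : ℕ} (hnm : n ≤ m)
    (h : state Sp xl y k n = .done) : state Sp xl y k m = .done := by
  induction m, hnm using Nat.le_induction with
  | base => exact h
  | succ m hm ih => simp only [state, ih, next]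

end Path

section Main

variable {Ω : Type*} {S : ℕ → Ω → ℤ} {xl y : ℤ} {k : ℕ} {ω : Ω}

lemma upTimes_zero_fst :
    (upTimes S xl y 0 ω).1 = ⨅ (t : ℕ) (_ : S t ω < xl), (t : ℕ∞) := rfl

lemma upTimes_zero_snd :
    (upTimes S xl y 0 ω).2 =
      ⨅ (t : ℕ) (_ : (upTimes S xl y 0 ω).1 < (t : ℕ∞) ∧ y ≤ S t ω), (t : ℕ∞) := rfl

lemma upTimes_succ_fst (i : ℕ) :
    (upTimes S xl y (i + 1) ω).1 =
      ⨅ (t : ℕ) (_ : (upTimes S xl y i ω).2 < (t : ℕ∞) ∧ S t ω < xl), (t : ℕ∞) := rfl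

lemma upTimes_succ_snd (i : ℕ) :
    (upTimes S xl y (i + 1) ω).2 =
      ⨅ (t : ℕ) (_ : (upTimes S xl y (i + 1) ω).1 < (t : ℕ∞) ∧ y ≤ S t ω), (t : ℕ∞) := rfl

lemma alive {u : ℕ} (h : (u : ℕ∞) < ⨅ (t : ℕ) (_ : S t ω ≤ 0), (t : ℕ∞)) :
    0 < S u ω := by
  by_contra hc
  push_neg at hc
  exact absurd (hit_le hc) (not_le.mpr h)

lemma aux_reach (hxl : 0 < xl) (hxy : xl < y) (j : ℕ) (hjk : j < k)
    (h2 : (upTimes S xl y j ω).2 < ⨅ (t : ℕ) (_ : S t ω ≤ 0), (t : ℕ∞)) :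
    ∃ n : ℕ, (upTimes S xl y j ω).2 = (n : ℕ∞) ∧
      state (fun t => S t ω) xl y k n = (if j + 1 = k then .done else .high (j + 1)) := by
  induction j with
  | zero =>
    have hbne : (upTimes S xl y 0 ω).2 ≠ ⊤ := ne_top_of_lt h2
    rw [upTimes_zero_snd] at hbne
    obtain ⟨n, hn, ⟨han, hyn⟩, hnmin⟩ := hit_ne_top hbne
    have hn2 : (upTimes S xl y 0 ω).2 = (n : ℕ∞) := by rw [upTimes_zero_snd]; exact hn
    have hane : (upTimes S xl y 0 ω).1 ≠ ⊤ := ne_top_of_lt han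
    rw [upTimes_zero_fst] at hane
    obtain ⟨m, hm, hSm, hmmin⟩ := hit_ne_top hane
    have hm1 : (upTimes S xl y 0 ω).1 = (m : ℕ∞) := by rw [upTimes_zero_fst]; exact hm
    have hmn : m < n := by rw [hm1] at han; exact_mod_cast han
    have hal : ∀ u, u ≤ n → 0 < S u ω := by
      intro u hu
      refine alive (lt_of_le_of_lt ?_ (hn2 ▸ h2))
      exact_mod_cast hu
    have hstm : state (fun t => S t ω) xl y k m = .low 0 := by
      rcases m with - | m'
      · simp only [state, if_neg (by have := hal 0 (by omega); omega : ¬ S 0 ω ≤ 0),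
          if_pos hSm]
      · have hpre : state (fun t => S t ω) xl y k m' = .pre :=
          stay_pre hxl fun u hu => by
            have := hmmin u (by omega); omega
        simp only [state, hpre, next,
          if_neg (by have := hal (m' + 1) (by omega); omega : ¬ S (m' + 1) ω ≤ 0),
          if_pos hSm]
    obtain ⟨n', rfl⟩ : ∃ n', n = n' + 1 := ⟨n - 1, by omega⟩
    have hstn' : state (fun t => S t ω) xl y k n' = .low 0 := by
      refine stay_low hxl (by omega) hstm fun u hu1 hu2 => ⟨hal u (by omega), ?_⟩
      have := hnmin u (by omega)
      by_contra hc
      push_neg at hc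
      exact this ⟨by rw [hm1]; exact_mod_cast hu1, hc⟩
    refine ⟨n' + 1, hn2, ?_⟩
    simp only [state, hstn', next,
      if_neg (by have := hal (n' + 1) le_rfl; omega : ¬ S (n' + 1) ω ≤ 0),
      if_pos hyn, zero_add]
  | succ j ih =>
    have hbne : (upTimes S xl y (j + 1) ω).2 ≠ ⊤ := ne_top_of_lt h2
    rw [upTimes_succ_snd] at hbne
    obtain ⟨n', hn', ⟨han', hyn'⟩, hnmin'⟩ := hit_ne_top hbne
    have hn2 : (upTimes S xl y (j + 1) ω).2 = (n' : ℕ∞) := by rw [upTimes_succ_snd]; exact hn'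
    have hane : (upTimes S xl y (j + 1) ω).1 ≠ ⊤ := ne_top_of_lt han'
    rw [upTimes_succ_fst] at hane
    obtain ⟨m', hm', ⟨hbm', hSm'⟩, hmmin'⟩ := hit_ne_top hane
    have hm1 : (upTimes S xl y (j + 1) ω).1 = (m' : ℕ∞) := by rw [upTimes_succ_fst]; exact hm'
    have hmn : m' < n' := by rw [hm1] at han'; exact_mod_cast han'
    have hprev : (upTimes S xl y j ω).2 < ⨅ (t : ℕ) (_ : S t ω ≤ 0), (t : ℕ∞) := by
      refine lt_trans (lt_of_lt_of_le hbm' ?_) (hn2 ▸ h2)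
      exact_mod_cast le_of_lt hmn
    obtain ⟨n, hn, hstn⟩ := ih (by omega) hprev
    rw [if_neg (by omega : ¬ j + 1 = k)] at hstn
    have hnm : n < m' := by rw [hn] at hbm'; exact_mod_cast hbm'
    have hal : ∀ u, u ≤ n' → 0 < S u ω := by
      intro u hu
      refine alive (lt_of_le_of_lt ?_ (hn2 ▸ h2))
      exact_mod_cast hu
    obtain ⟨m'', rfl⟩ : ∃ m'', m' = m'' + 1 := ⟨m' - 1, by omega⟩
    have hsthigh : state (fun t => S t ω) xl y k m'' = .high (j + 1) := by
      refine stay_high hxl (by omega) hstn fun u hu1 hu2 => ?_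
      have := hmmin' u (by omega)
      by_contra hc
      push_neg at hc
      exact this ⟨by rw [hn]; exact_mod_cast (by omega : n < u), by omega⟩
    have hstm : state (fun t => S t ω) xl y k (m'' + 1) = .low (j + 1) := by
      simp only [state, hsthigh, next,
        if_neg (by have := hal (m'' + 1) (by omega); omega : ¬ S (m'' + 1) ω ≤ 0),
        if_pos hSm']
    obtain ⟨n'', rfl⟩ : ∃ n'', n' = n'' + 1 := ⟨n' - 1, by omega⟩
    have hstn'' : state (fun t => S t ω) xl y k n'' = .low (j + 1) := by
      refine stay_low hxl (by omega) hstm fun u hu1 hu2 => ⟨hal u (by omega), ?_⟩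
      have := hnmin' u (by omega)
      by_contra hc
      push_neg at hc
      exact this ⟨by rw [hm1]; exact_mod_cast (by omega : m'' + 1 < u), hc⟩
    refine ⟨n'' + 1, hn2, ?_⟩
    simp only [state, hstn'', next,
      if_neg (by have := hal (n'' + 1) le_rfl; omega : ¬ S (n'' + 1) ω ≤ 0),
      if_pos hyn']

lemma reach_done (hxl : 0 < xl) (hxy : xl < y) (hk : 1 ≤ k)
    (h2 : (upTimes S xl y (k - 1) ω).2 < ⨅ (t : ℕ) (_ : S t ω ≤ 0), (t : ℕ∞)) :
    ∃ n : ℕ, state (fun t => S t ω) xl y k n = .done := by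
  obtain ⟨n, -, hst⟩ := aux_reach (k := k) hxl hxy (k - 1) (by omega) h2
  exact ⟨n, by rw [if_pos (by omega : k - 1 + 1 = k)] at hst; exact hst⟩

end Main

end Upx

open MeasureTheory ProbabilityTheory Upx

theorem stmt6 {Ω : Type*} [MeasurableSpace Ω] (μ : Measure Ω) [IsProbabilityMeasure μ]
    (X : ℕ → Ω → ℤ) (hmeas : ∀ i, Measurable (X i))
    (hindep : iIndepFun X μ)
    (hident : ∀ i, IdentDistrib (X i) (X 0) μ μ)
    (hstep : ∀ i, ∀ᵐ ω ∂μ, -1 ≤ X i ω)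
    (hint : Integrable (fun ω => (X 0 ω : ℝ)) μ)
    (hmean : ∫ ω, (X 0 ω : ℝ) ∂μ ≤ 0)
    (x xl y : ℤ) (hx : 0 < x) (hxl : 0 < xl) (hxy : xl < y)
    (k : ℕ) (hk : 1 ≤ k) :
    μ {ω | (upTimes (fun t ω => x + ∑ i ∈ Finset.range t, X i ω) xl y (k - 1) ω).2 <
        ⨅ (t : ℕ) (_ : x + ∑ i ∈ Finset.range t, X i ω ≤ 0), (t : ℕ∞)} ≤
      ENNReal.ofReal ((((xl : ℝ) - 1) / (y : ℝ)) ^ k) := by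
  classical
  set r : ℝ := ((xl : ℝ) - 1) / (y : ℝ) with hr
  set Sw : ℕ → Ω → ℤ := fun t ω => x + ∑ i ∈ Finset.range t, X i ω with hSw
  set M : ℕ → Ω → St := fun t ω => state (fun u => Sw u ω) xl y k t with hM
  set Y : ℕ → Ω → ℝ := fun t ω => val y k r (M t ω) (Sw t ω) with hY
  set C : ℕ → Ω → ℝ := fun t ω => coef y k r (M t ω) with hC
  have hy0 : (0:ℝ) < (y:ℤ) := ypos hxl hxy
  -- measurability
  have hSmeas : ∀ t, Measurable (Sw t) := fun t =>
    measurable_const.add (Finset.measurable_sum _ fun i _ => hmeas i)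
  have hMmeas : ∀ t, Measurable (M t) := by
    intro t
    induction t with
    | zero =>
      exact (measurable_of_countable
        (fun s : ℤ => if s ≤ 0 then St.dead else if s < xl then St.low 0 else St.pre)).comp
        (hSmeas 0)
    | succ t ih =>
      exact (measurable_of_countable
        (Function.uncurry (next xl y k))).comp (ih.prodMk (hSmeas (t + 1)))
  have hYmeas : ∀ t, Measurable (Y t) := fun t =>
    (measurable_of_countable (Function.uncurry (val y k r))).comp
      ((hMmeas t).prodMk (hSmeas t))
  have hCmeas : ∀ t, Measurable (C t) := fun t =>
    (measurable_of_countable (coef y k r)).comp (hMmeas t)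
  -- invariants and bounds
  have hInv : ∀ t ω, Inv y k (M t ω) (Sw t ω) := fun t ω =>
    inv_state (fun u => Sw u ω) hxy hk t
  have hY0 : ∀ t ω, 0 ≤ Y t ω := fun t ω => val_nonneg hxl hxy hr (hInv t ω)
  have hY1 : ∀ t ω, Y t ω ≤ 1 := fun t ω => val_le_one hxl hxy hr (hInv t ω)
  have hYint : ∀ t, Integrable (Y t) μ := by
    intro t
    refine (integrable_const (1:ℝ)).mono' (hYmeas t).aestronglyMeasurable ?_
    filter_upwards with ω
    rw [Real.norm_eq_abs, abs_le]
    exact ⟨by linarith [hY0 t ω], hY1 t ω⟩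
  have hCint : ∀ t, Integrable (C t) μ := by
    intro t
    refine (integrable_const (1:ℝ)).mono' (hCmeas t).aestronglyMeasurable ?_
    filter_upwards with ω
    rw [Real.norm_eq_abs, abs_le]
    exact ⟨by linarith [coef_nonneg (k := k) hxl hxy hr (M t ω)], coef_le_one (k := k) hxl hxy hr (M t ω)⟩
  have hXint : ∀ t, Integrable (fun ω => (X t ω : ℝ)) μ := fun t =>
    (((hident t).comp (measurable_of_countable _)).integrable_iff).mpr hint
  have hXmean : ∀ t, ∫ ω, (X t ω : ℝ) ∂μ ≤ 0 := fun t => by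
    have h := ((hident t).comp (measurable_of_countable (fun z : ℤ => (z : ℝ)))).integral_eq
    simp only [Function.comp_def] at h
    rw [h]
    exact hmean
  -- independence of C t and X t
  have hCX : ∀ t, IndepFun (C t) (fun ω => (X t ω : ℝ)) μ := by
    intro t
    have hdisj : Disjoint (Finset.range t) ({t} : Finset ℕ) := by
      simp [Finset.disjoint_singleton_right]
    have hbase := hindep.indepFun_finset (Finset.range t) {t} hdisj hmeas
    set φ : ((i : (Finset.range t : Finset ℕ)) → ℤ) → ℝ := fun v =>
      coef y k r (state (fun u => x + ∑ i ∈ Finset.range u,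
        (if h : i ∈ Finset.range t then v ⟨i, h⟩ else 0)) xl y k t) with hφ
    set ψ : ((i : ({t} : Finset ℕ)) → ℤ) → ℝ := fun v =>
      ((v ⟨t, Finset.mem_singleton_self t⟩ : ℤ) : ℝ) with hψ
    have hcomp := hbase.comp (φ := φ) (ψ := ψ) (measurable_of_countable φ)
      (measurable_of_countable ψ)
    have heq1 : C t = φ ∘ (fun ω (i : (Finset.range t : Finset ℕ)) => X i ω) := by
      funext ω
      show coef y k r (M t ω) = φ (fun i : (Finset.range t : Finset ℕ) => X i ω)
      rw [hφ]
      congr 1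
      refine state_congr t fun u hu => ?_
      have hsum : ∑ i ∈ Finset.range u, (if h : i ∈ Finset.range t then X i ω else 0)
          = ∑ i ∈ Finset.range u, X i ω :=
        Finset.sum_congr rfl fun i hi =>
          dif_pos (by simp only [Finset.mem_range] at hi ⊢; omega)
      rw [hsum]
    have heq2 : (fun ω => (X t ω : ℝ))
        = ψ ∘ (fun ω (i : ({t} : Finset ℕ)) => X i ω) := rfl
    rw [heq1, heq2]
    exact hcomp
  -- one-step supermartingale
  have hstepY : ∀ t, ∫ ω, Y (t + 1) ω ∂μ ≤ ∫ ω, Y t ω ∂μ := by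
    intro t
    have hprod : Integrable (fun ω => C t ω * (X t ω : ℝ)) μ :=
      (hXint t).bdd_mul (hCmeas t).aestronglyMeasurable
        (c := 1) (Filter.Eventually.of_forall fun ω => by
          rw [Real.norm_eq_abs, abs_le]
          exact ⟨by linarith [coef_nonneg (k := k) hxl hxy hr (M t ω)],
            coef_le_one (k := k) hxl hxy hr (M t ω)⟩)
    have hae : ∀ᵐ ω ∂μ, Y (t + 1) ω ≤ Y t ω + C t ω * (X t ω : ℝ) := by
      filter_upwards [hstep t] with ω hω
      have hsucc : Sw (t + 1) ω = Sw t ω + X t ω := by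
        simp only [hSw, Finset.sum_range_succ, add_assoc]
      have hcast : ((Sw (t + 1) ω : ℤ) : ℝ) - ((Sw t ω : ℤ) : ℝ) = (X t ω : ℝ) := by
        rw [hsucc]; push_cast; ring
      have := val_next hxl hxy hk hr (hInv t ω) (by omega : Sw t ω - 1 ≤ Sw (t + 1) ω)
      rw [hcast] at this
      exact this
    calc ∫ ω, Y (t + 1) ω ∂μ ≤ ∫ ω, (Y t ω + C t ω * (X t ω : ℝ)) ∂μ :=
          integral_mono_ae (hYint (t + 1)) ((hYint t).add hprod) hae
      _ = ∫ ω, Y t ω ∂μ + ∫ ω, C t ω * (X t ω : ℝ) ∂μ :=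
          integral_add (hYint t) hprod
      _ ≤ ∫ ω, Y t ω ∂μ := by
          have hmul : ∫ ω, C t ω * (X t ω : ℝ) ∂μ
              = (∫ ω, C t ω ∂μ) * ∫ ω, (X t ω : ℝ) ∂μ :=
            (hCX t).integral_fun_mul_eq_mul_integral (hCint t).1 (hXint t).1
          have h1 : (0:ℝ) ≤ ∫ ω, C t ω ∂μ :=
            integral_nonneg fun ω => coef_nonneg (k := k) hxl hxy hr (M t ω)
          nlinarith [hXmean t, mul_nonneg h1 (neg_nonneg.mpr (hXmean t))]
  -- initial bound
  have hstart : ∫ ω, Y 0 ω ∂μ ≤ r ^ k := by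
    have hpt : ∀ ω, Y 0 ω ≤ r ^ k := by
      intro ω
      have hSw0 : Sw 0 ω = x := by simp [hSw]
      have hM0 : M 0 ω = if x ≤ 0 then St.dead else if x < xl then St.low 0 else St.pre := by
        simp only [hM, state, hSw0]
      have h5 : Y 0 ω = val y k r (M 0 ω) (Sw 0 ω) := rfl
      rw [h5, hM0, hSw0, if_neg (by omega : ¬ x ≤ 0)]
      split_ifs with h1
      · simp only [val]
        have hc : ((x:ℤ):ℝ) ≤ (xl:ℝ) - 1 := by exact_mod_cast (by omega : x ≤ xl - 1)
        calc r ^ (k - 0 - 1) * ((x:ℤ):ℝ) / y ≤ r ^ (k - 0 - 1 + 1) := aux1 hxl hxy hr _ hc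
          _ = r ^ k := by congr 1; omega
      · simp only [val]; exact le_refl _
    calc ∫ ω, Y 0 ω ∂μ ≤ ∫ _ω, r ^ k ∂μ :=
          integral_mono (hYint 0) (integrable_const _) hpt
      _ = r ^ k := by simp
  have hYn : ∀ n, ∫ ω, Y n ω ∂μ ≤ r ^ k := by
    intro n
    induction n with
    | zero => exact hstart
    | succ n ih => exact le_trans (hstepY n) ih
  -- the done sets
  set D : ℕ → Set Ω := fun n => {ω | M n ω = St.done} with hD
  have hDmeas : ∀ n, MeasurableSet (D n) := fun n => by
    have : D n = M n ⁻¹' {St.done} := rfl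
    rw [this]
    exact (hMmeas n) trivial
  have hDmono : Monotone D := by
    intro a b hab ω hω
    exact done_absorb hab hω
  have hDn : ∀ n, μ (D n) ≤ ENNReal.ofReal (r ^ k) := by
    intro n
    have h1 : (μ (D n)).toReal = ∫ ω, (D n).indicator (1 : Ω → ℝ) ω ∂μ := by
      rw [integral_indicator_one (hDmeas n), measureReal_def]
    have h2 : ∫ ω, (D n).indicator (1 : Ω → ℝ) ω ∂μ ≤ ∫ ω, Y n ω ∂μ := by
      refine integral_mono ((integrable_const (1:ℝ)).indicator (hDmeas n)) (hYint n) ?_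
      intro ω
      by_cases hω : ω ∈ D n
      · rw [Set.indicator_of_mem hω, Pi.one_apply]
        have hd : M n ω = St.done := hω
        have h5 : Y n ω = val y k r (M n ω) (Sw n ω) := rfl
        rw [h5, hd]
        exact le_refl _
      · rw [Set.indicator_of_notMem hω]
        exact hY0 n ω
    calc μ (D n) = ENNReal.ofReal ((μ (D n)).toReal) :=
          (ENNReal.ofReal_toReal (measure_ne_top μ _)).symm
      _ ≤ ENNReal.ofReal (r ^ k) := by
          apply ENNReal.ofReal_le_ofReal
          rw [h1]
          exact le_trans h2 (hYn n)
  -- event inclusion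
  have hsub : {ω | (upTimes Sw xl y (k - 1) ω).2 <
      ⨅ (t : ℕ) (_ : Sw t ω ≤ 0), (t : ℕ∞)} ⊆ ⋃ n, D n := by
    intro ω hω
    obtain ⟨n, hn⟩ := reach_done hxl hxy hk hω
    exact Set.mem_iUnion.mpr ⟨n, hn⟩
  calc μ {ω | (upTimes Sw xl y (k - 1) ω).2 <
        ⨅ (t : ℕ) (_ : Sw t ω ≤ 0), (t : ℕ∞)} ≤ μ (⋃ n, D n) := measure_mono hsub
    _ = ⨆ n, μ (D n) := hDmono.directed_le.measure_iUnion
    _ ≤ ENNReal.ofReal (r ^ k) := iSup_le hDn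
end

section
/- Fix a real number α ∈ (1, 2]. For every real x > 6/(α−1), the sum Σ_{ℓ ≥ 0} 2^{ℓ − x·2^{ℓ(α−1)/2}} ≤ 2^{1−x}. -/
theorem stmt10 (α : ℝ) (hα1 : 1 < α) (hα2 : α ≤ 2) (x : ℝ) (hx : 6 / (α - 1) < x) :
    ∑' ℓ : ℕ, (2 : ℝ) ^ ((ℓ : ℝ) - x * (2 : ℝ) ^ ((ℓ : ℝ) * (α - 1) / 2)) ≤
      (2 : ℝ) ^ (1 - x) := by
  have hα : 0 < α - 1 := by linarith
  have hx0 : 0 < x := lt_trans (by positivity) hx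
  have key : ∀ ℓ : ℕ, (2 : ℝ) ^ ((ℓ : ℝ) - x * (2 : ℝ) ^ ((ℓ : ℝ) * (α - 1) / 2)) ≤
      (2 : ℝ) ^ (-x) * (1 / 2 : ℝ) ^ ℓ := by
    intro ℓ
    have h1 : (2 : ℝ) ^ (-x) * (1 / 2 : ℝ) ^ ℓ = (2 : ℝ) ^ (-x - (ℓ : ℝ)) := by
      rw [Real.rpow_sub two_pos, Real.rpow_natCast]
      field_simp
      rw [← mul_pow]; norm_num
    rw [h1]
    apply Real.rpow_le_rpow_left_iff one_lt_two |>.mpr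
    -- need: ℓ - x * 2^(ℓ(α-1)/2) ≤ -x - ℓ, i.e. x * (2^t - 1) ≥ 2ℓ where t = ℓ(α-1)/2
    set t : ℝ := (ℓ : ℝ) * (α - 1) / 2 with ht
    have ht0 : 0 ≤ t := by positivity
    have h2 : t * Real.log 2 + 1 ≤ (2 : ℝ) ^ t := by
      rw [Real.rpow_def_of_pos two_pos]
      rw [mul_comm]; exact Real.add_one_le_exp _
    have hlog : (2 : ℝ) / 3 ≤ Real.log 2 := by
      have := Real.log_two_gt_d9; linarith
    have h3 : x * t ≥ 3 * (ℓ : ℝ) := by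
      have hxt : x * t ≥ (6 / (α - 1)) * t := by
        apply mul_le_mul_of_nonneg_right hx.le ht0
      have : (6 / (α - 1)) * t = 3 * (ℓ : ℝ) := by
        field_simp [ht]; ring
      linarith
    have h4 : x * (t * Real.log 2) ≥ x * (t * (2/3)) := by
      apply mul_le_mul_of_nonneg_left _ hx0.le
      exact mul_le_mul_of_nonneg_left hlog ht0
    nlinarith [mul_le_mul_of_nonneg_left (sub_le_sub_right h2 1) hx0.le]
  have hsum : Summable fun ℓ : ℕ => (2 : ℝ) ^ ((ℓ : ℝ) - x * (2 : ℝ) ^ ((ℓ : ℝ) * (α - 1) / 2)) := by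
    apply Summable.of_nonneg_of_le (fun ℓ => by positivity) key
    exact (summable_geometric_of_lt_one (by norm_num) (by norm_num)).mul_left _
  have hsum2 : Summable fun ℓ : ℕ => (2 : ℝ) ^ (-x) * (1 / 2 : ℝ) ^ ℓ :=
    (summable_geometric_of_lt_one (by norm_num) (by norm_num)).mul_left _
  calc ∑' ℓ : ℕ, (2 : ℝ) ^ ((ℓ : ℝ) - x * (2 : ℝ) ^ ((ℓ : ℝ) * (α - 1) / 2))
      ≤ ∑' ℓ : ℕ, (2 : ℝ) ^ (-x) * (1 / 2 : ℝ) ^ ℓ := Summable.tsum_le_tsum key hsum hsum2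
    _ = (2 : ℝ) ^ (-x) * ∑' ℓ : ℕ, (1 / 2 : ℝ) ^ ℓ := tsum_mul_left
    _ = (2 : ℝ) ^ (1 - x) := by
        rw [tsum_geometric_of_lt_one (by norm_num) (by norm_num)]
        rw [Real.rpow_sub two_pos, Real.rpow_one]
        rw [Real.rpow_neg two_pos.le]
        norm_num
        rw [mul_comm, div_eq_mul_inv]
end

section
/- Let X₁, X₂ be i.i.d. copies of an integer random variable X with P(X ≥ −1) = 1, and let m ≥ 1 be an integer. Then E[(X₁ − X₂)²·1{|X₁ − X₂| ≤ 2^m}] ≥ (P(X = −1)/16) · E[X²·1{X ∈ [0, 2^m)}]. -/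
open MeasureTheory ProbabilityTheory

theorem stmt14 {Ω : Type*} [MeasurableSpace Ω] (μ : Measure Ω) [IsProbabilityMeasure μ]
    (X₁ X₂ : Ω → ℤ) (h1 : Measurable X₁) (h2 : Measurable X₂)
    (hindep : IndepFun X₁ X₂ μ)
    (hident : IdentDistrib X₂ X₁ μ μ)
    (hstep : ∀ᵐ ω ∂μ, -1 ≤ X₁ ω) (m : ℕ) (hm : 1 ≤ m) :
    (μ {ω | X₁ ω = -1}).toReal / 16 *
        ∫ ω, (if 0 ≤ X₁ ω ∧ X₁ ω < 2 ^ m then (X₁ ω : ℝ) ^ 2 else 0) ∂μ ≤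
      ∫ ω, (if |X₁ ω - X₂ ω| ≤ 2 ^ m then ((X₁ ω : ℝ) - (X₂ ω : ℝ)) ^ 2 else 0) ∂μ := by
  classical
  set f : ℤ → ℝ := fun x => if 0 ≤ x ∧ x < 2 ^ m then (x : ℝ) ^ 2 else 0 with hf
  set g : ℤ → ℝ := fun y => if y = -1 then (1 : ℝ) else 0 with hg
  have hfm : Measurable f := measurable_from_top
  have hgm : Measurable g := measurable_from_top
  -- bounds
  have hfb : ∀ x, ‖f x‖ ≤ ((2:ℝ) ^ m) ^ 2 := by
    intro x
    simp only [hf, Real.norm_eq_abs]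
    split_ifs with h
    · rw [abs_of_nonneg (by positivity)]
      have hx1 : (x:ℝ) < (2:ℝ) ^ m := by exact_mod_cast h.2
      have hx0 : (0:ℝ) ≤ (x:ℝ) := by exact_mod_cast h.1
      nlinarith
    · rw [abs_zero]; positivity
  have hgb : ∀ y, ‖g y‖ ≤ 1 := by
    intro y; simp only [hg]; split_ifs <;> simp
  have hfi : Integrable (fun ω => f (X₁ ω)) μ :=
    (integrable_const (((2:ℝ) ^ m) ^ 2)).mono'
      ((hfm.comp h1).aestronglyMeasurable) (Filter.Eventually.of_forall fun ω => hfb _)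
  have hgi : Integrable (fun ω => g (X₂ ω)) μ :=
    (integrable_const (1:ℝ)).mono'
      ((hgm.comp h2).aestronglyMeasurable) (Filter.Eventually.of_forall fun ω => hgb _)
  -- the RHS integrand and its integrability
  set F : Ω → ℝ := fun ω => if |X₁ ω - X₂ ω| ≤ 2 ^ m then ((X₁ ω : ℝ) - (X₂ ω : ℝ)) ^ 2 else 0
    with hF
  have hFm : Measurable F := by
    have h : F = (fun p : ℤ × ℤ =>
        if |p.1 - p.2| ≤ 2 ^ m then ((p.1 : ℝ) - (p.2 : ℝ)) ^ 2 else 0) ∘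
        (fun ω => (X₁ ω, X₂ ω)) := rfl
    rw [h]
    exact (measurable_of_countable _).comp (h1.prodMk h2)
  have hFnn : ∀ ω, 0 ≤ F ω := by
    intro ω
    simp only [hF]
    split_ifs with h
    · positivity
    · exact le_refl 0
  have hFb : ∀ ω, ‖F ω‖ ≤ ((2:ℝ) ^ m) ^ 2 := by
    intro ω
    simp only [hF, Real.norm_eq_abs]
    split_ifs with h
    · rw [abs_of_nonneg (by positivity)]
      have habs : |(X₁ ω : ℝ) - (X₂ ω : ℝ)| ≤ (2:ℝ) ^ m := by
        calc |(X₁ ω : ℝ) - (X₂ ω : ℝ)| = |((X₁ ω - X₂ ω : ℤ) : ℝ)| := by push_cast; ring_nf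
          _ ≤ (2:ℝ) ^ m := by
            rw [← Int.cast_abs]
            exact_mod_cast h
      nlinarith [abs_nonneg ((X₁ ω : ℝ) - (X₂ ω : ℝ)), sq_abs ((X₁ ω : ℝ) - (X₂ ω : ℝ))]
    · rw [abs_zero]; positivity
  have hFi : Integrable F μ :=
    (integrable_const (((2:ℝ) ^ m) ^ 2)).mono' hFm.aestronglyMeasurable
      (Filter.Eventually.of_forall hFb)
  -- independence gives product formula
  have hprod : ∫ ω, g (X₂ ω) * f (X₁ ω) ∂μ
      = (∫ ω, g (X₂ ω) ∂μ) * ∫ ω, f (X₁ ω) ∂μ :=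
    (hindep.symm.comp hgm hfm).integral_fun_mul_eq_mul_integral hgi.aestronglyMeasurable hfi.aestronglyMeasurable
  -- ∫ g(X₂) = μ {X₁ = -1}
  have hgval : ∫ ω, g (X₂ ω) ∂μ = (μ {ω | X₁ ω = -1}).toReal := by
    have hs : MeasurableSet {ω | X₂ ω = -1} := h2 (measurableSet_singleton (-1))
    have heq : (fun ω => g (X₂ ω)) = Set.indicator {ω | X₂ ω = -1} (fun _ => (1:ℝ)) := by
      funext ω
      simp only [hg, Set.indicator_apply, Set.mem_setOf_eq]
    rw [heq, integral_indicator_const _ hs]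
    have hmeq : μ {ω | X₂ ω = -1} = μ {ω | X₁ ω = -1} :=
      hident.measure_mem_eq (measurableSet_singleton (-1))
    simp [hmeq, Measure.real]
  -- pointwise bound
  have hpt : ∀ ω, g (X₂ ω) * f (X₁ ω) ≤ F ω := by
    intro ω
    by_cases h2' : X₂ ω = -1
    · by_cases h1' : 0 ≤ X₁ ω ∧ X₁ ω < 2 ^ m
      · have hle : X₁ ω + 1 ≤ 2 ^ m := Int.lt_iff_add_one_le.mp h1'.2
        have hcond : |X₁ ω - X₂ ω| ≤ 2 ^ m := by
          rw [h2', show X₁ ω - (-1) = X₁ ω + 1 from by ring,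
            abs_of_nonneg (by linarith [h1'.1])]
          exact hle
        simp only [hF, hg, hf, if_pos h2', if_pos h1', if_pos hcond, one_mul, h2']
        have h0 : (0:ℝ) ≤ (X₁ ω : ℝ) := by exact_mod_cast h1'.1
        push_cast
        nlinarith
      · simp only [hg, hf, if_neg h1', mul_zero]
        exact hFnn ω
    · simp only [hg, if_neg h2', zero_mul]
      exact hFnn ω
  -- put together
  have hmono : ∫ ω, g (X₂ ω) * f (X₁ ω) ∂μ ≤ ∫ ω, F ω ∂μ :=
    integral_mono (hfi.bdd_mul ((hgm.comp h2).aestronglyMeasurable) (c := 1) (Filter.Eventually.of_forall fun ω => hgb _)) hFi hpt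
  have hfint_nonneg : 0 ≤ ∫ ω, f (X₁ ω) ∂μ := by
    apply integral_nonneg
    intro ω
    simp only [hf]
    split_ifs with h
    · positivity
    · exact le_refl 0
  have hp : (0:ℝ) ≤ (μ {ω | X₁ ω = -1}).toReal := ENNReal.toReal_nonneg
  show (μ {ω | X₁ ω = -1}).toReal / 16 * ∫ ω, f (X₁ ω) ∂μ ≤ ∫ ω, F ω ∂μ
  calc (μ {ω | X₁ ω = -1}).toReal / 16 * ∫ ω, f (X₁ ω) ∂μ
      ≤ (μ {ω | X₁ ω = -1}).toReal * ∫ ω, f (X₁ ω) ∂μ := by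
        apply mul_le_mul_of_nonneg_right _ hfint_nonneg
        linarith
    _ = ∫ ω, g (X₂ ω) * f (X₁ ω) ∂μ := by rw [hprod, hgval]
    _ ≤ ∫ ω, F ω ∂μ := hmono
end

section
/- Let (S_t, t ≥ 0) be an integer random walk with S_0 = 1 whose i.i.d. steps satisfy X ≥ −1 almost surely, and let σ = inf{t : S_t = 0}. Then for every positive integer n, P(σ = n) = (1/n)·P(S_n − S_0 = −1) = (1/n)·P(Ŝ_n = n − 1), where Ŝ is the walk of the increments shifted by +1 (i.e., Ŝ_n = Σ_{i=1}^n (X_i + 1)). -/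
open Finset

/-- Partial sums. -/
def psum (x : ℕ → ℤ) (j : ℕ) : ℤ := ∑ i ∈ Finset.range j, x i

/-- Rotation-by-`k` goodness: the walk started at 1 with steps `x` read cyclically
from position `k` first hits 0 at time `n`. -/
def walkGood (n : ℕ) (x : ℕ → ℤ) (k : ℕ) : Prop :=
  1 + ∑ i ∈ Finset.range n, x ((k + i) % n) = 0 ∧
  ∀ t < n, 1 + ∑ i ∈ Finset.range t, x ((k + i) % n) ≠ 0

/-- Partial rotated sums in terms of plain partial sums. -/
lemma rotsum {n k : ℕ} (hk : k < n) (x : ℕ → ℤ)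
    (hsum : psum x n = -1) :
    ∀ t, t ≤ n → ∑ i ∈ range t, x ((k + i) % n) =
      if k + t ≤ n then psum x (k + t) - psum x k
      else psum x (k + t - n) - 1 - psum x k := by
  intro t
  induction t with
  | zero => intro _; simp [Nat.le_of_lt hk, psum]
  | succ t ih =>
    intro ht
    have ht' : t ≤ n := Nat.le_of_succ_le ht
    rw [sum_range_succ, ih ht']
    have hps : ∀ j, psum x (j + 1) = psum x j + x j := fun j => sum_range_succ x j
    rcases lt_trichotomy (k + t) n with h | h | h
    · have h1 : k + t ≤ n := h.le
      have hm : (k + t) % n = k + t := Nat.mod_eq_of_lt h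
      by_cases h2 : k + (t + 1) ≤ n
      · rw [if_pos h1, if_pos h2, hm]
        have he : k + (t + 1) = (k + t) + 1 := by ring
        rw [he, hps (k + t)]; ring
      · omega
    · have h1 : k + t ≤ n := h.le
      have h2 : ¬ k + (t + 1) ≤ n := by omega
      have hm : (k + t) % n = 0 := by rw [h, Nat.mod_self]
      rw [if_pos h1, if_neg h2, hm]
      have h3 : k + (t + 1) - n = 1 := by omega
      have h4 : psum x 1 = psum x 0 + x 0 := hps 0
      have h5 : psum x 0 = 0 := by simp [psum]
      rw [h3, h, hsum]
      omega
    · have h1 : ¬ k + t ≤ n := by omega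
      have h2 : ¬ k + (t + 1) ≤ n := by omega
      have hlt : k + t - n < n := by omega
      have hm : (k + t) % n = k + t - n := by
        rw [Nat.mod_eq_sub_mod (by omega), Nat.mod_eq_of_lt hlt]
      rw [if_neg h1, if_neg h2, hm]
      have h3 : k + (t + 1) - n = (k + t - n) + 1 := by omega
      rw [h3, hps (k + t - n)]; ring

/-- Existence: the first argmin of partial sums is good. -/
lemma walkGood_exists {n : ℕ} (hn : 1 ≤ n) (x : ℕ → ℤ)
    (hsum : psum x n = -1) :
    ∃ k < n, walkGood n x k := by
  classical
  obtain ⟨k0, hk0n, hmin0⟩ := Finset.exists_min_image (range n) (psum x)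
    ⟨0, mem_range.2 (by omega)⟩
  have hex : ∃ k, k < n ∧ psum x k = psum x k0 := ⟨k0, mem_range.1 hk0n, rfl⟩
  have hspec := Nat.find_spec hex
  have hleast' := fun m (hm : m < Nat.find hex) => Nat.find_min hex hm
  generalize hgen : Nat.find hex = k at hspec hleast'
  obtain ⟨hkn, hkM⟩ := hspec
  have hmin : ∀ j < n, psum x k ≤ psum x j := by
    intro j hj; rw [hkM]; exact hmin0 j (mem_range.2 hj)
  have hleast : ∀ j < k, psum x j ≠ psum x k := by
    intro j hj hjM
    exact hleast' j hj ⟨lt_trans hj hkn, by rw [hjM, hkM]⟩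
  have h0 : psum x 0 = 0 := by simp [psum]
  refine ⟨k, hkn, ?_, ?_⟩
  · rw [rotsum hkn x hsum n le_rfl]
    by_cases h : k + n ≤ n
    · have hk0 : k = 0 := by omega
      rw [if_pos h, hk0]
      simp only [Nat.zero_add, hsum, h0]; ring
    · rw [if_neg h]
      have he : k + n - n = k := by omega
      rw [he]; ring
  · intro t htn
    rw [rotsum hkn x hsum t htn.le]
    by_cases h : k + t ≤ n
    · rw [if_pos h]
      rcases eq_or_lt_of_le h with he | hlt
      · have hk1 : 1 ≤ k := by omega
        have hM0 : psum x k ≠ 0 := by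
          intro hM0; exact hleast 0 hk1 (by rw [h0, hM0])
        rw [he, hsum]
        intro hcon; apply hM0; linarith
      · have := hmin (k + t) hlt
        intro hcon; linarith
    · rw [if_neg h]
      have hj : k + t - n < k := by omega
      have hj2 : k + t - n < n := lt_trans hj hkn
      have h2 := hleast (k + t - n) hj
      intro hcon
      exact h2 (by linarith)

/-- Goodness forces being the first argmin, hence uniqueness. -/
lemma walkGood_unique {n : ℕ} (hn : 1 ≤ n) (x : ℕ → ℤ)
    (hx : ∀ i < n, -1 ≤ x i) (hsum : psum x n = -1)
    {k k' : ℕ} (hk : k < n) (hk' : k' < n)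
    (hg : walkGood n x k) (hg' : walkGood n x k') : k = k' := by
  have h0 : psum x 0 = 0 := by simp [psum]
  have hstep : ∀ j < n, psum x j - 1 ≤ psum x (j + 1) := by
    intro j hj
    have h1 : psum x (j + 1) = psum x j + x j := sum_range_succ x j
    have := hx j hj
    omega
  have main : ∀ m < n, walkGood n x m →
      (∀ j, m ≤ j → j < n → psum x m ≤ psum x j) ∧
      (∀ j < m, psum x m < psum x j) := by
    intro m hm hgm
    obtain ⟨-, hsecond⟩ := hgm
    have cond1 : ∀ j, m < j → j < n → psum x j ≠ psum x m - 1 := by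
      intro j hmj hjn hcon
      have ht : j - m < n := by omega
      have h2 := hsecond (j - m) ht
      rw [rotsum hm x hsum (j - m) (by omega),
        if_pos (by omega : m + (j - m) ≤ n)] at h2
      have hje : m + (j - m) = j := by omega
      rw [hje, hcon] at h2
      exact h2 (by ring)
    have condn : 1 ≤ m → psum x m ≠ 0 := by
      intro hm1 hcon
      have ht : n - m < n := by omega
      have h2 := hsecond (n - m) ht
      rw [rotsum hm x hsum (n - m) (by omega),
        if_pos (by omega : m + (n - m) ≤ n)] at h2
      have hje : m + (n - m) = n := by omega
      rw [hje, hsum, hcon] at h2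
      exact h2 (by ring)
    have cond2 : ∀ j, 1 ≤ j → j < m → psum x j ≠ psum x m := by
      intro j hj1 hjm hcon
      have ht : n - m + j < n := by omega
      have h2 := hsecond (n - m + j) ht
      rw [rotsum hm x hsum (n - m + j) (by omega),
        if_neg (by omega : ¬ m + (n - m + j) ≤ n)] at h2
      have hje : m + (n - m + j) - n = j := by omega
      rw [hje, hcon] at h2
      exact h2 (by ring)
    have cond0 : ∀ j < m, psum x j ≠ psum x m := by
      intro j hjm
      rcases Nat.eq_zero_or_pos j with rfl | hj1
      · rw [h0]
        intro hcon
        exact condn (by omega) hcon.symm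
      · exact cond2 j hj1 hjm
    have part1 : ∀ j, m ≤ j → j < n → psum x m ≤ psum x j := by
      intro j hmj hjn
      induction j with
      | zero =>
        have hm0 : m = 0 := by omega
        rw [hm0]
      | succ j ih =>
        rcases Nat.lt_or_ge m (j + 1) with hlt | hge
        · have h1 := ih (by omega) (by omega)
          have h2 := hstep j (by omega)
          have h3 := cond1 (j + 1) hlt hjn
          omega
        · have hmj1 : m = j + 1 := by omega
          rw [hmj1]
    refine ⟨part1, ?_⟩
    have hum0 : psum x m ≤ 0 := by
      have h1 := part1 (n - 1) (by omega) (by omega)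
      have h2 := hstep (n - 1) (by omega)
      have h3 : n - 1 + 1 = n := by omega
      rw [h3, hsum] at h2
      omega
    have part2ge : ∀ j, j ≤ m → psum x m ≤ psum x j := by
      intro j
      induction j with
      | zero => intro _; omega
      | succ j ih =>
        intro hj
        have h1 := ih (by omega)
        have h2 := cond0 j (by omega)
        have h3 := hstep j (by omega)
        omega
    intro j hjm
    have := part2ge j hjm.le
    have := cond0 j hjm
    omega
  obtain ⟨p1, p2⟩ := main k hk hg
  obtain ⟨q1, q2⟩ := main k' hk' hg'
  rcases lt_trichotomy k k' with h | h | h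
  · have h1 := q2 k h
    have h2 := p1 k' h.le hk'
    omega
  · exact h
  · have h1 := p2 k' h
    have h2 := q1 k h.le hk
    omega

/-- modular inverse facts -/
lemma mod_left_inv {n k a : ℕ} (hk : k < n) (ha : a < n) :
    ((k + a) % n + (n - k)) % n = a := by
  rcases Nat.lt_or_ge (k + a) n with h | h
  · rw [Nat.mod_eq_of_lt h]
    have he : k + a + (n - k) = a + n := by omega
    rw [he, Nat.add_mod_right, Nat.mod_eq_of_lt ha]
  · have h2 : (k + a) % n = k + a - n := by
      rw [Nat.mod_eq_sub_mod h, Nat.mod_eq_of_lt (by omega)]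
    rw [h2]
    have he : k + a - n + (n - k) = a := by omega
    rw [he, Nat.mod_eq_of_lt ha]

lemma mod_right_inv {n k b : ℕ} (hk : k < n) (hb : b < n) :
    (k + (b + (n - k)) % n) % n = b := by
  rcases Nat.lt_or_ge (b + (n - k)) n with h | h
  · rw [Nat.mod_eq_of_lt h]
    have he : k + (b + (n - k)) = b + n := by omega
    rw [he, Nat.add_mod_right, Nat.mod_eq_of_lt hb]
  · have h2 : (b + (n - k)) % n = b - k := by
      rw [Nat.mod_eq_sub_mod h, Nat.mod_eq_of_lt (by omega)]
      omega
    rw [h2]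
    have he : k + (b - k) = b := by omega
    rw [he, Nat.mod_eq_of_lt hb]

lemma rot_total_sum {n k : ℕ} (hk : k < n) (x : ℕ → ℤ) :
    ∑ i ∈ range n, x ((k + i) % n) = ∑ i ∈ range n, x i := by
  apply Finset.sum_nbij' (fun i => (k + i) % n) (fun i => (i + (n - k)) % n)
  · intro a _; exact mem_range.2 (Nat.mod_lt _ (by omega))
  · intro a _; exact mem_range.2 (Nat.mod_lt _ (by omega))
  · intro a ha; exact mod_left_inv hk (mem_range.1 ha)
  · intro a ha; exact mod_right_inv hk (mem_range.1 ha)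
  · intro a _; rfl

/-- A good rotation forces total sum -1. -/
lemma walkGood_sum {n : ℕ} (hn : 1 ≤ n) (x : ℕ → ℤ) {k : ℕ} (hk : k < n)
    (hg : walkGood n x k) : psum x n = -1 := by
  have h1 := hg.1
  rw [rot_total_sum hk x] at h1
  have h2 : psum x n = ∑ i ∈ range n, x i := rfl
  omega

open MeasureTheory ProbabilityTheory Finset
open scoped ENNReal

lemma int_set_measurable (s : Set ℤ) : MeasurableSet s :=
  (Set.to_countable s).measurableSet

/-- The law of an injectively-indexed tuple of iid variables does not depend
on the indices: it is a fixed sum over the (countable) target set. -/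
lemma tuple_law {Ω : Type*} [MeasurableSpace Ω] (μ : Measure Ω)
    (X : ℕ → Ω → ℤ) (hmeas : ∀ i, Measurable (X i))
    (hindep : iIndepFun X μ)
    (hident : ∀ i, IdentDistrib (X i) (X 0) μ μ)
    {n : ℕ} (e : Fin n → ℕ) (he : Function.Injective e) (G : Set (Fin n → ℤ)) :
    μ {ω | (fun i => X (e i) ω) ∈ G} =
      ∑' y : G, ∏ i : Fin n, μ (X 0 ⁻¹' {(y : Fin n → ℤ) i}) := by
  classical
  have hYmeas : ∀ c : Fin n → ℤ, MeasurableSet {ω | ∀ i, X (e i) ω = c i} := by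
    intro c
    have h : {ω | ∀ i, X (e i) ω = c i} = ⋂ i, X (e i) ⁻¹' {c i} := by
      ext ω; simp [Set.mem_iInter]
    rw [h]
    exact MeasurableSet.iInter fun i => (hmeas (e i)) (measurableSet_singleton _)
  have key : ∀ c : Fin n → ℤ,
      μ {ω | ∀ i, X (e i) ω = c i} = ∏ i : Fin n, μ (X 0 ⁻¹' {c i}) := by
    intro c
    set sets : ℕ → Set ℤ := fun j => {z | ∀ i, e i = j → z = c i} with hsets
    have h1 := hindep.measure_inter_preimage_eq_mul (Finset.univ.image e)
      (sets := sets) (fun j _ => int_set_measurable _)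
    have h2 : ⋂ j ∈ Finset.univ.image e, X j ⁻¹' sets j =
        {ω | ∀ i, X (e i) ω = c i} := by
      ext ω
      simp only [Set.mem_iInter, Finset.mem_image, Finset.mem_univ, true_and,
        Set.mem_preimage, Set.mem_setOf_eq, hsets]
      constructor
      · intro h i
        exact h (e i) ⟨i, rfl⟩ i rfl
      · rintro h j ⟨i, rfl⟩ i' hi'
        rw [← hi']; exact h i'
    have h3 : ∀ i : Fin n, sets (e i) = {c i} := by
      intro i
      ext z
      simp only [hsets, Set.mem_setOf_eq, Set.mem_singleton_iff]
      constructor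
      · intro h; exact h i rfl
      · intro h i' hi'
        rw [h, he hi']
    rw [h2] at h1
    rw [h1, Finset.prod_image (fun i _ j _ h => he h)]
    apply Finset.prod_congr rfl
    intro i _
    rw [h3 i]
    exact (hident (e i)).measure_mem_eq (measurableSet_singleton _)
  have hdecomp : {ω | (fun i => X (e i) ω) ∈ G} =
      ⋃ y : G, {ω | ∀ i, X (e i) ω = (y : Fin n → ℤ) i} := by
    ext ω
    simp only [Set.mem_setOf_eq, Set.mem_iUnion]
    constructor
    · intro h
      exact ⟨⟨_, h⟩, fun i => rfl⟩
    · rintro ⟨⟨y, hy⟩, h⟩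
      have : (fun i => X (e i) ω) = y := funext h
      rw [this]; exact hy
  rw [hdecomp, measure_iUnion ?_ fun y => hYmeas _]
  · exact tsum_congr fun y => key _
  · intro y y' hne
    simp only [Function.onFun, Set.disjoint_left]
    intro ω hω hω'
    apply hne
    apply Subtype.ext
    funext i
    rw [← hω i, ← hω' i]
section Glue

open Finset MeasureTheory ProbabilityTheory
open scoped ENNReal

lemma nat_sInf_eq_iff {S : Set ℕ} {n : ℕ} (hn : 1 ≤ n) :
    sInf S = n ↔ n ∈ S ∧ ∀ t < n, t ∉ S := by
  constructor
  · intro h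
    have hne : S.Nonempty := by
      by_contra hc
      rw [Set.not_nonempty_iff_eq_empty.mp hc, Nat.sInf_empty] at h
      omega
    exact ⟨h ▸ Nat.sInf_mem hne, fun t ht => Nat.notMem_of_lt_sInf (h ▸ ht)⟩
  · rintro ⟨h1, h2⟩
    refine le_antisymm (Nat.sInf_le h1) ?_
    by_contra hc
    push_neg at hc
    exact h2 _ hc (Nat.sInf_mem ⟨n, h1⟩)

/-- extension of a finite tuple by zero -/
def ext0 (n : ℕ) (y : Fin n → ℤ) : ℕ → ℤ := fun i => if h : i < n then y ⟨i, h⟩ else 0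

lemma walkGood_rot {n : ℕ} (x : ℕ → ℤ) {k : ℕ} (hk : k < n) :
    walkGood n x k ↔ walkGood n (ext0 n (fun i : Fin n => x ((k + i) % n))) 0 := by
  have hs : ∀ t ≤ n, ∑ i ∈ range t,
      (ext0 n (fun i : Fin n => x ((k + i) % n))) ((0 + i) % n) =
      ∑ i ∈ range t, x ((k + i) % n) := by
    intro t ht
    apply Finset.sum_congr rfl
    intro i hi
    have hi' : i < n := lt_of_lt_of_le (mem_range.1 hi) ht
    rw [Nat.zero_add, Nat.mod_eq_of_lt hi', ext0]
    simp [hi']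
  unfold walkGood
  constructor
  · rintro ⟨h1, h2⟩
    exact ⟨by rw [hs n le_rfl]; exact h1, fun t ht => by rw [hs t ht.le]; exact h2 t ht⟩
  · rintro ⟨h1, h2⟩
    rw [hs n le_rfl] at h1
    exact ⟨h1, fun t ht => by rw [← hs t ht.le]; exact h2 t ht⟩

lemma walkGood_zero_iff {n : ℕ} (x : ℕ → ℤ) :
    walkGood n x 0 ↔ (1 + ∑ i ∈ range n, x i = 0 ∧
      ∀ t < n, 1 + ∑ i ∈ range t, x i ≠ 0) := by
  have hs : ∀ t ≤ n, ∑ i ∈ range t, x ((0 + i) % n) = ∑ i ∈ range t, x i := by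
    intro t ht
    apply Finset.sum_congr rfl
    intro i hi
    have hi' : i < n := lt_of_lt_of_le (mem_range.1 hi) ht
    rw [Nat.zero_add, Nat.mod_eq_of_lt hi']
  unfold walkGood
  constructor
  · rintro ⟨h1, h2⟩
    exact ⟨by rw [← hs n le_rfl]; exact h1, fun t ht => by rw [← hs t ht.le]; exact h2 t ht⟩
  · rintro ⟨h1, h2⟩
    exact ⟨by rw [hs n le_rfl]; exact h1, fun t ht => by rw [hs t ht.le]; exact h2 t ht⟩

theorem cycle_main {Ω : Type*} [MeasurableSpace Ω] (μ : Measure Ω) [IsProbabilityMeasure μ]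
    (X : ℕ → Ω → ℤ) (hmeas : ∀ i, Measurable (X i))
    (hindep : iIndepFun X μ)
    (hident : ∀ i, IdentDistrib (X i) (X 0) μ μ)
    (hstep : ∀ i, ∀ᵐ ω ∂μ, -1 ≤ X i ω)
    (n : ℕ) (hn : 1 ≤ n) :
    μ {ω | walkGood n (fun i => X i ω) 0} =
      (n : ℝ≥0∞)⁻¹ * μ {ω | ∑ i ∈ Finset.range n, X i ω = -1} := by
  classical
  set A : ℕ → Set Ω := fun k => {ω | walkGood n (fun i => X i ω) k} with hA
  set B : Set Ω := {ω | ∑ i ∈ Finset.range n, X i ω = -1} with hB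
  set Nc : Set Ω := {ω | ∀ i, i < n → -1 ≤ X i ω} with hNc
  -- null complement
  have hNcnull : μ Ncᶜ = 0 := by
    have hae : ∀ᵐ ω ∂μ, ∀ i, i < n → -1 ≤ X i ω :=
      ae_all_iff.2 fun i => (hstep i).mono fun ω h _ => h
    have := ae_iff.mp hae
    simpa [hNc, Set.compl_setOf] using this
  -- measurability of rotated-sum level sets
  have hms : ∀ k t : ℕ, MeasurableSet {ω | 1 + ∑ i ∈ range t, X ((k + i) % n) ω = 0} := by
    intro k t
    have hmeas' : Measurable fun ω => 1 + ∑ i ∈ range t, X ((k + i) % n) ω :=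
      measurable_const.add (Finset.measurable_sum _ fun i _ => hmeas _)
    exact hmeas' (measurableSet_singleton 0)
  have measA : ∀ k, MeasurableSet (A k) := by
    intro k
    have hrw : A k = {ω | 1 + ∑ i ∈ range n, X ((k + i) % n) ω = 0} ∩
        ⋂ (t : ℕ) (_ : t < n), {ω | 1 + ∑ i ∈ range t, X ((k + i) % n) ω = 0}ᶜ := by
      ext ω
      simp only [hA, Set.mem_setOf_eq, walkGood, Set.mem_inter_iff, Set.mem_iInter,
        Set.mem_compl_iff]
    rw [hrw]
    exact (hms k n).inter
      (MeasurableSet.iInter fun t => MeasurableSet.iInter fun _ => (hms k t).compl)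
  have measB : MeasurableSet B := by
    have hmeas' : Measurable fun ω => ∑ i ∈ range n, X i ω :=
      Finset.measurable_sum _ fun i _ => hmeas _
    exact hmeas' (measurableSet_singleton (-1))
  have measNc : MeasurableSet Nc := by
    have hrw : Nc = ⋂ (i : ℕ) (_ : i < n), X i ⁻¹' {z | -1 ≤ z} := by
      ext ω
      simp only [hNc, Set.mem_setOf_eq, Set.mem_iInter, Set.mem_preimage]
    rw [hrw]
    exact MeasurableSet.iInter fun i => MeasurableSet.iInter fun _ =>
      (hmeas i) (int_set_measurable _)
  -- equal measures of the A k via exchangeability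
  have hAeq : ∀ k, k < n → μ (A k) = μ (A 0) := by
    intro k hk
    set G : Set (Fin n → ℤ) := {y | walkGood n (ext0 n y) 0} with hG
    have hpre : ∀ m, m < n →
        A m = {ω | (fun i : Fin n => X ((m + i) % n) ω) ∈ G} := by
      intro m hm
      ext ω
      simp only [hA, hG, Set.mem_setOf_eq]
      exact walkGood_rot (fun i => X i ω) hm
    have hinj : ∀ m, m < n → Function.Injective (fun i : Fin n => (m + i.1) % n) := by
      intro m hm a b hab
      have h1 := congrArg (fun z => (z + (n - m)) % n) hab
      simp only at h1
      rw [mod_left_inv hm a.2, mod_left_inv hm b.2] at h1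
      exact Fin.ext h1
    rw [hpre k hk, hpre 0 (by omega),
      tuple_law μ X hmeas hindep hident _ (hinj k hk) G,
      tuple_law μ X hmeas hindep hident _ (hinj 0 (by omega)) G]
  -- A k ⊆ B  for k < n
  have hAB : ∀ k, k < n → A k ⊆ B := by
    intro k hk ω hω
    exact walkGood_sum hn (fun i => X i ω) hk hω
  -- decomposition of B ∩ Nc
  have hdecomp : B ∩ Nc = ⋃ k ∈ range n, (A k ∩ Nc) := by
    ext ω
    simp only [Set.mem_inter_iff, Set.mem_iUnion, mem_range, exists_prop]
    constructor
    · rintro ⟨hωB, hωN⟩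
      obtain ⟨k, hk, hgood⟩ := walkGood_exists hn (fun i => X i ω) hωB
      exact ⟨k, hk, hgood, hωN⟩
    · rintro ⟨k, hk, hωA, hωN⟩
      exact ⟨hAB k hk hωA, hωN⟩
  -- disjointness
  have hdisj : (↑(range n) : Set ℕ).PairwiseDisjoint fun k => A k ∩ Nc := by
    intro k hk k' hk' hne
    simp only [Function.onFun, Set.disjoint_left]
    rintro ω ⟨hωA, hωN⟩ ⟨hωA', _⟩
    apply hne
    have hk2 := mem_range.1 (Finset.mem_coe.1 hk)
    have hk2' := mem_range.1 (Finset.mem_coe.1 hk')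
    exact walkGood_unique hn (fun i => X i ω) (fun i hi => hωN i hi)
      (walkGood_sum hn (fun i => X i ω) hk2 hωA) hk2 hk2' hωA hωA'
  -- measure computation
  have hsum : μ B = (n : ℝ≥0∞) * μ (A 0) := by
    have h1 : μ B = μ (B ∩ Nc) := (measure_inter_conull hNcnull).symm
    have h2 : μ (B ∩ Nc) = ∑ k ∈ range n, μ (A k ∩ Nc) := by
      rw [hdecomp]
      exact measure_biUnion_finset hdisj fun k _ => (measA k).inter measNc
    have h3 : ∀ k, k < n → μ (A k ∩ Nc) = μ (A 0) := by
      intro k hk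
      rw [measure_inter_conull hNcnull]
      exact hAeq k hk
    rw [h1, h2, Finset.sum_congr rfl fun k hk => h3 k (mem_range.1 hk)]
    simp [Finset.sum_const, card_range, nsmul_eq_mul]
  have hn0 : (n : ℝ≥0∞) ≠ 0 := Nat.cast_ne_zero.2 (by omega)
  have hnt : (n : ℝ≥0∞) ≠ ⊤ := ENNReal.natCast_ne_top n
  rw [hsum, ← mul_assoc, ENNReal.inv_mul_cancel hn0 hnt, one_mul]

end Glue

open MeasureTheory ProbabilityTheory
open scoped ENNReal

theorem stmt15 {Ω : Type*} [MeasurableSpace Ω] (μ : Measure Ω) [IsProbabilityMeasure μ]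
    (X : ℕ → Ω → ℤ) (hmeas : ∀ i, Measurable (X i))
    (hindep : iIndepFun X μ)
    (hident : ∀ i, IdentDistrib (X i) (X 0) μ μ)
    (hstep : ∀ i, ∀ᵐ ω ∂μ, -1 ≤ X i ω)
    (n : ℕ) (hn : 1 ≤ n) :
    μ {ω | sInf {t : ℕ | 1 + ∑ i ∈ Finset.range t, X i ω = 0} = n} =
        (n : ℝ≥0∞)⁻¹ * μ {ω | ∑ i ∈ Finset.range n, X i ω = -1} ∧
      μ {ω | sInf {t : ℕ | 1 + ∑ i ∈ Finset.range t, X i ω = 0} = n} =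
        (n : ℝ≥0∞)⁻¹ * μ {ω | ∑ i ∈ Finset.range n, (X i ω + 1) = (n : ℤ) - 1} := by
  have hmain := cycle_main μ X hmeas hindep hident hstep n hn
  have hev : {ω | sInf {t : ℕ | 1 + ∑ i ∈ Finset.range t, X i ω = 0} = n} =
      {ω | walkGood n (fun i => X i ω) 0} := by
    ext ω
    simp only [Set.mem_setOf_eq]
    rw [nat_sInf_eq_iff hn, walkGood_zero_iff]
    simp only [Set.mem_setOf_eq]
  have hBeq : {ω | ∑ i ∈ Finset.range n, (X i ω + 1) = (n : ℤ) - 1} =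
      {ω | ∑ i ∈ Finset.range n, X i ω = -1} := by
    ext ω
    simp only [Set.mem_setOf_eq, Finset.sum_add_distrib, Finset.sum_const,
      Finset.card_range, nsmul_eq_mul, mul_one]
    omega
  rw [hev, hBeq]
  exact ⟨hmain, hmain⟩
end
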